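/- Assume the event T_α holds for some 0 < α < 1 and λ0 > 0. Let S = S1 ∪ S2 with S1 ∩ S2 = ∅, S1 ≠ ∅, s1 := |S1|, φ(6,S1) > 0 and ‖(b^S)_{S2}‖₁ > 0, and choose the tuning parameter λ := λ0^{2/(1+α)} · ‖(b^S)_{S2}‖₁^{−(1−α)/(1+α)}. Then ‖f̂ − f⁰‖_n² + λ‖β̂ − b^S‖₁ ≤ 56·λ0^{4/(1+α)}·‖(b^S)_{S2}‖₁^{−2(1−α)/(1+α)}·s1/φ²(6,S1) + (21/2)·λ0^{2/(1+α)}·‖(b^S)_{S2}‖₁^{2α/(1+α)} + 7‖ff_S − f⁰‖_n². -/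

import Mathlib

open Finset

noncomputable section

/-- Squared normalized norm: `‖v‖ₙ² = ‖v‖₂²/n`. -/
def nsq (n : ℕ) (v : Fin n → ℝ) : ℝ := (∑ i, v i ^ 2) / n

/-- Normalized norm `‖v‖ₙ`. -/
def nnorm (n : ℕ) (v : Fin n → ℝ) : ℝ := Real.sqrt (nsq n v)

/-- `ℓ₁`-norm of a coefficient vector. -/
def l1 {p : ℕ} (β : Fin p → ℝ) : ℝ := ∑ j, |β j|

/-- `f_β := ∑ⱼ βⱼ ψⱼ`. -/
def fvec {n p : ℕ} (ψ : Fin p → Fin n → ℝ) (β : Fin p → ℝ) : Fin n → ℝ :=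
  fun i => ∑ j, β j * ψ j i

/-- Restriction `β_S` of `β` to an index set `S`. -/
def restr {p : ℕ} (S : Finset (Fin p)) (β : Fin p → ℝ) : Fin p → ℝ :=
  fun j => if j ∈ S then β j else 0

/-- Compatibility constant `φ²(L,S)`. -/
def phiSq {n p : ℕ} (ψ : Fin p → Fin n → ℝ) (L : ℝ) (S : Finset (Fin p)) : ℝ :=
  sInf {x : ℝ | ∃ β : Fin p → ℝ, l1 (restr S β) = 1 ∧ l1 (β - restr S β) ≤ L ∧
    x = S.card * nsq n (fvec ψ (restr S β) - fvec ψ (β - restr S β))}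

/-- Covering number `N(δ, F, ‖·‖ₙ)`. -/
def covN (n : ℕ) (δ : ℝ) (F : Set (Fin n → ℝ)) : ℕ :=
  sInf {N : ℕ | ∃ g : Fin N → (Fin n → ℝ), ∀ f ∈ F, ∃ k, nnorm n (f - g k) ≤ δ}

lemma my_l1_nonneg {p : ℕ} (β : Fin p → ℝ) : 0 ≤ l1 β :=
  Finset.sum_nonneg fun _ _ => abs_nonneg _

lemma my_nsq_nonneg (n : ℕ) (v : Fin n → ℝ) : 0 ≤ nsq n v :=
  div_nonneg (Finset.sum_nonneg fun _ _ => sq_nonneg _) (Nat.cast_nonneg n)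

lemma my_fvec_sub {n p : ℕ} (ψ : Fin p → Fin n → ℝ) (x y : Fin p → ℝ) (i : Fin n) :
    fvec ψ (x - y) i = fvec ψ x i - fvec ψ y i := by
  simp [fvec, sub_mul, Finset.sum_sub_distrib]

lemma my_l1_split {p : ℕ} (S1 : Finset (Fin p)) (δ : Fin p → ℝ) :
    l1 δ = l1 (restr S1 δ) + l1 (δ - restr S1 δ) := by
  unfold l1
  rw [← Finset.sum_add_distrib]
  apply Finset.sum_congr rfl
  intro j _
  by_cases h : j ∈ S1 <;> simp [restr, h]

lemma my_nsq_sub_le {n : ℕ} (hn : 0 < (n : ℝ)) (x y : Fin n → ℝ) :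
    nsq n (fun i => x i - y i) ≤ 2 * nsq n x + 2 * nsq n y := by
  unfold nsq
  have h : ∑ i, (x i - y i) ^ 2 ≤ 2 * ∑ i, x i ^ 2 + 2 * ∑ i, y i ^ 2 := by
    rw [Finset.mul_sum, Finset.mul_sum, ← Finset.sum_add_distrib]
    exact Finset.sum_le_sum fun i _ => by nlinarith [sq_nonneg (x i + y i)]
  calc (∑ i, (x i - y i) ^ 2) / (n : ℝ)
      ≤ (2 * ∑ i, x i ^ 2 + 2 * ∑ i, y i ^ 2) / (n : ℝ) := by
        exact div_le_div_of_nonneg_right h hn.le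
      _ = 2 * ((∑ i, x i ^ 2) / n) + 2 * ((∑ i, y i ^ 2) / n) := by ring

lemma my_amgm_step (α lam0 s v : ℝ) (hα0 : 0 < α) (hα1 : α < 1) (hlam0 : 0 < lam0)
    (hs : 0 ≤ s) (hv : 0 ≤ v) :
    lam0 * Real.sqrt s ^ (1 - α) * v ^ α ≤
      (1 - α) / 2 * s + (1 + α) / 2 * (lam0 ^ (2 / (1 + α)) * v ^ (2 * α / (1 + α))) := by
  have h1α : (0:ℝ) < 1 + α := by linarith
  set Y := lam0 ^ (2 / (1 + α)) * v ^ (2 * α / (1 + α)) with hY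
  have hYnn : 0 ≤ Y := mul_nonneg (Real.rpow_nonneg hlam0.le _) (Real.rpow_nonneg hv _)
  have key : lam0 * Real.sqrt s ^ (1 - α) * v ^ α = s ^ ((1 - α) / 2) * Y ^ ((1 + α) / 2) := by
    have h1 : Real.sqrt s ^ (1 - α) = s ^ ((1 - α) / 2) := by
      rw [Real.sqrt_eq_rpow, ← Real.rpow_mul hs]
      congr 1
      ring
    have h2 : Y ^ ((1 + α) / 2)
        = lam0 ^ ((2 / (1 + α)) * ((1 + α) / 2)) * v ^ ((2 * α / (1 + α)) * ((1 + α) / 2)) := by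
      rw [hY, Real.mul_rpow (Real.rpow_nonneg hlam0.le _) (Real.rpow_nonneg hv _),
        ← Real.rpow_mul hlam0.le, ← Real.rpow_mul hv]
    have e1 : (2 / (1 + α)) * ((1 + α) / 2) = 1 := by field_simp; try ring
    have e2 : (2 * α / (1 + α)) * ((1 + α) / 2) = α := by field_simp; try ring
    rw [h1, h2, e1, e2, Real.rpow_one]
    ring
  rw [key]
  exact Real.geom_mean_le_arith_mean2_weighted (by linarith) (by linarith) hs hYnn (by ring)

lemma my_absorb_step (α lam0 M lam v : ℝ) (hα0 : 0 < α) (hα1 : α < 1) (hlam0 : 0 < lam0)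
    (hM : 0 < M) (hv : 0 ≤ v)
    (hlam : lam = lam0 ^ (2 / (1 + α)) * M ^ (-(1 - α) / (1 + α))) :
    (1 + α) / 2 * (lam0 ^ (2 / (1 + α)) * v ^ (2 * α / (1 + α))) ≤
      1 / 2 * (lam * M) + lam * v := by
  have h1α : (0:ℝ) < 1 + α := by linarith
  have h1α' : (0:ℝ) < 1 - α := by linarith
  have hlam_pos : 0 < lam := by
    rw [hlam]; exact mul_pos (Real.rpow_pos_of_pos hlam0 _) (Real.rpow_pos_of_pos hM _)
  set τ : ℝ := 2 * α / (1 + α) with hτ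
  have hτ0 : 0 ≤ τ := by positivity
  have hτ1 : τ ≤ 1 := by rw [hτ, div_le_one h1α]; linarith
  set r : ℝ := ((1 + α) / 2) ^ ((1 + α) / (1 - α)) with hr
  have hb0 : (0:ℝ) < (1 + α) / 2 := by linarith
  have hr0 : 0 < r := Real.rpow_pos_of_pos hb0 _
  -- key AM-GM fact : (1/2)^τ ≤ 1/(1+α)
  have hk : ((1:ℝ)/2) ^ τ ≤ 1 / (1 + α) := by
    have := Real.geom_mean_le_arith_mean2_weighted
      (w₁ := (1 - α) / (1 + α)) (w₂ := 2 * α / (1 + α)) (p₁ := 1) (p₂ := 1/2)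
      (by positivity) (by positivity) (by norm_num) (by norm_num) (by field_simp [hτ, h1α.ne', h1α'.ne']; try ring)
    rw [Real.one_rpow, one_mul] at this
    calc ((1:ℝ)/2) ^ τ ≤ (1 - α) / (1 + α) * 1 + 2 * α / (1 + α) * (1 / 2) := this
      _ = 1 / (1 + α) := by field_simp [hτ, h1α.ne', h1α'.ne']; try ring
  -- hence (1+α)/2 ≤ (1/2)^(1-τ)
  have hhalfpow : 0 < ((1:ℝ)/2) ^ τ := Real.rpow_pos_of_pos (by norm_num) _
  have hk2 : (1 + α) / 2 ≤ ((1:ℝ)/2) ^ (1 - τ) := by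
    have h2 : (1 + α) * ((1:ℝ)/2) ^ τ ≤ 1 := by
      calc (1 + α) * ((1:ℝ)/2) ^ τ ≤ (1 + α) * (1 / (1 + α)) :=
            mul_le_mul_of_nonneg_left hk (by linarith)
        _ = 1 := by field_simp [hτ, h1α.ne', h1α'.ne']; try ring
    have h3 : ((1:ℝ)/2) ^ (1 - τ) = (1/2) / ((1:ℝ)/2) ^ τ := by
      rw [Real.rpow_sub (by norm_num), Real.rpow_one]
    rw [h3, le_div_iff₀ hhalfpow]
    nlinarith [h2]
  -- r ≤ 1/2
  have hr12 : r ≤ 1 / 2 := by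
    have e3 : (1 - τ) * ((1 + α) / (1 - α)) = 1 := by rw [hτ]; field_simp [hτ, h1α.ne', h1α'.ne']; try ring
    calc r ≤ (((1:ℝ)/2) ^ (1 - τ)) ^ ((1 + α) / (1 - α)) := by
          rw [hr]
          exact Real.rpow_le_rpow hb0.le hk2 (by positivity)
      _ = ((1:ℝ)/2) ^ ((1 - τ) * ((1 + α) / (1 - α))) := (Real.rpow_mul (by norm_num) _ _).symm
      _ = 1/2 := by rw [e3, Real.rpow_one]
  -- r ^ (τ - 1) = 2 / (1 + α)
  have hrτ1 : r ^ (τ - 1) = 2 / (1 + α) := by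
    have e4 : ((1 + α) / (1 - α)) * (τ - 1) = -1 := by rw [hτ]; field_simp [hτ, h1α.ne', h1α'.ne']; try ring
    rw [hr, ← Real.rpow_mul hb0.le, e4, Real.rpow_neg_one, inv_div]
  set w : ℝ := r * M with hw
  have hw0 : 0 < w := mul_pos hr0 hM
  -- pointwise bound  v^τ ≤ w^τ + w^(τ-1) * v
  have hvτ : v ^ τ ≤ w ^ τ + w ^ (τ - 1) * v := by
    rcases le_total v w with h | h
    · have h1 : v ^ τ ≤ w ^ τ := Real.rpow_le_rpow hv h hτ0
      have h2 : 0 ≤ w ^ (τ - 1) * v := mul_nonneg (Real.rpow_nonneg hw0.le _) hv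
      linarith
    · have hv0 : 0 < v := lt_of_lt_of_le hw0 h
      have h1 : v ^ τ = v ^ (τ - 1) * v := by
        rw [← Real.rpow_add_one hv0.ne' (τ - 1), sub_add_cancel]
      have h2 : v ^ (τ - 1) ≤ w ^ (τ - 1) :=
        Real.rpow_le_rpow_of_nonpos hw0 h (by linarith)
      have h3 : 0 ≤ w ^ τ := Real.rpow_nonneg hw0.le _
      nlinarith [mul_le_mul_of_nonneg_right h2 hv]
  -- scalar identities
  have hid1 : lam0 ^ (2 / (1 + α)) * w ^ (τ - 1) = lam * (2 / (1 + α)) := by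
    have eM : M ^ (τ - 1) = M ^ (-(1 - α) / (1 + α)) := by
      congr 1
      rw [hτ]
      field_simp [hτ, h1α.ne']
      try ring
    rw [hw, Real.mul_rpow hr0.le hM.le, hrτ1, eM, hlam]
    ring
  have hid2 : lam0 ^ (2 / (1 + α)) * w ^ τ ≤ lam * (2 / (1 + α)) * (1/2) * M := by
    have h1 : w ^ τ = w ^ (τ - 1) * w := by
      rw [← Real.rpow_add_one hw0.ne' (τ - 1), sub_add_cancel]
    calc lam0 ^ (2 / (1 + α)) * w ^ τ
        = (lam0 ^ (2 / (1 + α)) * w ^ (τ - 1)) * w := by rw [h1]; ring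
      _ = lam * (2 / (1 + α)) * (r * M) := by rw [hid1, hw]
      _ ≤ lam * (2 / (1 + α)) * ((1/2) * M) := by
          apply mul_le_mul_of_nonneg_left _ (by positivity)
          exact mul_le_mul_of_nonneg_right hr12 hM.le
      _ = lam * (2 / (1 + α)) * (1/2) * M := by ring
  -- put together
  have hmain : lam0 ^ (2 / (1 + α)) * v ^ τ
      ≤ lam * (2 / (1 + α)) * (1/2) * M + lam * (2 / (1 + α)) * v := by
    calc lam0 ^ (2 / (1 + α)) * v ^ τ
        ≤ lam0 ^ (2 / (1 + α)) * (w ^ τ + w ^ (τ - 1) * v) :=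
          mul_le_mul_of_nonneg_left hvτ (Real.rpow_nonneg hlam0.le _)
      _ = lam0 ^ (2 / (1 + α)) * w ^ τ + (lam0 ^ (2 / (1 + α)) * w ^ (τ - 1)) * v := by ring
      _ ≤ lam * (2 / (1 + α)) * (1/2) * M + lam * (2 / (1 + α)) * v := by
          rw [hid1]; linarith [hid2]
  have := mul_le_mul_of_nonneg_left hmain (le_of_lt (by linarith : (0:ℝ) < (1 + α) / 2))
  calc (1 + α) / 2 * (lam0 ^ (2 / (1 + α)) * v ^ (2 * α / (1 + α)))
      = (1 + α) / 2 * (lam0 ^ (2 / (1 + α)) * v ^ τ) := by rw [hτ]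
    _ ≤ (1 + α) / 2 * (lam * (2 / (1 + α)) * (1/2) * M + lam * (2 / (1 + α)) * v) := this
    _ = 1 / 2 * (lam * M) + lam * v := by field_simp [hτ, h1α.ne', h1α'.ne']; try ring

lemma my_compat_le {n p : ℕ} (ψ : Fin p → Fin n → ℝ) (S1 : Finset (Fin p)) (δ : Fin p → ℝ)
    (hv1 : 0 < l1 (restr S1 δ)) (h6 : l1 (δ - restr S1 δ) ≤ 6 * l1 (restr S1 δ)) :
    phiSq ψ 6 S1 * (l1 (restr S1 δ)) ^ 2 ≤ S1.card * nsq n (fvec ψ δ) := by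
  set v1 := l1 (restr S1 δ) with hv1def
  set β : Fin p → ℝ := fun j => if j ∈ S1 then δ j / v1 else -δ j / v1 with hβ
  have hrestr : restr S1 β = fun j => restr S1 δ j / v1 := by
    funext j; by_cases h : j ∈ S1 <;> simp [restr, hβ, h]
  have hl1r : l1 (restr S1 β) = 1 := by
    rw [hrestr]
    unfold l1
    have h : ∀ j ∈ univ, |restr S1 δ j / v1| = |restr S1 δ j| / v1 := fun j _ => by
      rw [abs_div, abs_of_pos hv1]
    rw [Finset.sum_congr rfl h, ← Finset.sum_div]
    exact div_self hv1.ne'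
  have hsub : β - restr S1 β = fun j => (δ j - restr S1 δ j) / (-v1) := by
    funext j
    by_cases h : j ∈ S1 <;> simp [restr, hβ, h, Pi.sub_apply] <;> ring
  have hl16 : l1 (β - restr S1 β) ≤ 6 := by
    rw [hsub]
    unfold l1
    have h : ∀ j ∈ univ, |(δ j - restr S1 δ j) / (-v1)| = |δ j - restr S1 δ j| / v1 :=
      fun j _ => by rw [abs_div, abs_neg, abs_of_pos hv1]
    rw [Finset.sum_congr rfl h, ← Finset.sum_div, div_le_iff₀ hv1]
    have : l1 (δ - restr S1 δ) = ∑ j, |δ j - restr S1 δ j| := by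
      unfold l1; apply Finset.sum_congr rfl; intro j _; rw [Pi.sub_apply]
    linarith [h6, this ▸ h6]
  have hdiff : fvec ψ (restr S1 β) - fvec ψ (β - restr S1 β) = fun i => fvec ψ δ i / v1 := by
    funext i
    rw [Pi.sub_apply]
    unfold fvec
    rw [← Finset.sum_sub_distrib, Finset.sum_div]
    apply Finset.sum_congr rfl
    intro j _
    by_cases h : j ∈ S1 <;> simp [restr, hβ, h] <;> ring
  have hnsq : nsq n (fun i => fvec ψ δ i / v1) = nsq n (fvec ψ δ) / v1 ^ 2 := by
    unfold nsq
    have h : (∑ i, (fvec ψ δ i / v1) ^ 2) = (∑ i, fvec ψ δ i ^ 2) / v1 ^ 2 := by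
      rw [Finset.sum_div]
      exact Finset.sum_congr rfl fun i _ => div_pow _ _ _
    show (∑ i, (fvec ψ δ i / v1) ^ 2) / (n:ℝ) = ((∑ i, fvec ψ δ i ^ 2) / (n:ℝ)) / v1 ^ 2
    rw [h]
    ring
  have hmem : (S1.card : ℝ) * (nsq n (fvec ψ δ) / v1 ^ 2) ∈
      {x : ℝ | ∃ β : Fin p → ℝ, l1 (restr S1 β) = 1 ∧ l1 (β - restr S1 β) ≤ 6 ∧
        x = S1.card * nsq n (fvec ψ (restr S1 β) - fvec ψ (β - restr S1 β))} := by
    exact ⟨β, hl1r, hl16, by rw [hdiff, hnsq]⟩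
  have hbdd : BddBelow {x : ℝ | ∃ β : Fin p → ℝ, l1 (restr S1 β) = 1 ∧ l1 (β - restr S1 β) ≤ 6 ∧
      x = S1.card * nsq n (fvec ψ (restr S1 β) - fvec ψ (β - restr S1 β))} := by
    refine ⟨0, fun x hx => ?_⟩
    obtain ⟨β', _, _, hx⟩ := hx
    rw [hx]
    exact mul_nonneg (Nat.cast_nonneg _) (my_nsq_nonneg _ _)
  have hle : phiSq ψ 6 S1 ≤ (S1.card : ℝ) * (nsq n (fvec ψ δ) / v1 ^ 2) := csInf_le hbdd hmem
  have h2 := mul_le_mul_of_nonneg_right hle (sq_nonneg v1)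
  calc phiSq ψ 6 S1 * v1 ^ 2 ≤ (S1.card : ℝ) * (nsq n (fvec ψ δ) / v1 ^ 2) * v1 ^ 2 := h2
    _ = S1.card * nsq n (fvec ψ δ) := by field_simp

lemma my_l1_decomp {p : ℕ} (S1 S2 : Finset (Fin p)) (hdisj : Disjoint S1 S2)
    (b hb : Fin p → ℝ) (hsupp : ∀ j, j ∉ S1 ∪ S2 → b j = 0) :
    l1 b + l1 ((hb - b) - restr S1 (hb - b)) ≤
      l1 hb + l1 (restr S1 (hb - b)) + 2 * l1 (restr S2 b) := by
  have key : ∀ j ∈ (univ : Finset (Fin p)),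
      |b j| + |(hb - b) j - restr S1 (hb - b) j| ≤
        |hb j| + |restr S1 (hb - b) j| + 2 * |restr S2 b j| := by
    intro j _
    by_cases h1 : j ∈ S1
    · have h2 : j ∉ S2 := fun h => (Finset.disjoint_left.mp hdisj h1) h
      simp only [restr, if_pos h1, if_neg h2, Pi.sub_apply, sub_self, abs_zero]
      have h3 : |hb j - (hb j - b j)| ≤ |hb j| + |hb j - b j| := abs_sub _ _
      have h4 : |hb j - (hb j - b j)| = |b j| := by congr 1; ring
      linarith
    · by_cases h2 : j ∈ S2
      · simp only [restr, if_neg h1, if_pos h2, Pi.sub_apply, sub_zero, abs_zero]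
        have h3 : |hb j - b j| ≤ |hb j| + |b j| := abs_sub _ _
        linarith
      · have hb0 : b j = 0 := hsupp j (by simp [h1, h2])
        simp [restr, h1, h2, Pi.sub_apply, hb0]
  have hsum := Finset.sum_le_sum key
  rw [Finset.sum_add_distrib] at hsum
  have e1 : ∑ j, (|hb j| + |restr S1 (hb - b) j| + 2 * |restr S2 b j|)
      = (∑ j, |hb j|) + (∑ j, |restr S1 (hb - b) j|) + 2 * ∑ j, |restr S2 b j| := by
    rw [Finset.sum_add_distrib, Finset.sum_add_distrib, ← Finset.mul_sum]
  rw [e1] at hsum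
  unfold l1
  have e2 : ∑ j, |(hb - b) j - restr S1 (hb - b) j| = ∑ j, |((hb - b) - restr S1 (hb - b)) j| := by
    exact Finset.sum_congr rfl fun j _ => by simp [Pi.sub_apply]
  rw [← e2]
  exact hsum

lemma my_sq_trick (a c d : ℝ) (ha : 0 ≤ a) (hc : 0 ≤ c) (hd : 0 ≤ d) (h : a ^ 2 ≤ c * d) :
    a ≤ 2 * c + d / 8 := by
  have hb : 0 ≤ 2 * c + d / 8 := by linarith
  have h2 : a ^ 2 ≤ (2 * c + d / 8) ^ 2 := by nlinarith [sq_nonneg (2 * c - d / 8)]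
  exact (pow_le_pow_iff_left₀ ha hb two_ne_zero).mp h2

set_option maxHeartbeats 1000000 in
theorem stmt5 {n p : ℕ} (hn : 1 ≤ n) (hp : 1 ≤ p)
    (ψ : Fin p → Fin n → ℝ) (hψ : ∀ j, ∑ i, (ψ j i) ^ 2 ≤ (n : ℝ))
    (β0 : Fin p → ℝ) (ε : Fin n → ℝ)
    (α lam0 lam : ℝ) (hα0 : 0 < α) (hα1 : α < 1) (hlam0 : 0 < lam0)
    (S S1 S2 : Finset (Fin p)) (hS : S = S1 ∪ S2) (hdisj : Disjoint S1 S2)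
    (hS1ne : S1.Nonempty) (hphi : 0 < phiSq ψ 6 S1)
    (bS : Fin p → ℝ) (hbS_supp : ∀ j, j ∉ S → bS j = 0)
    (hbS_proj : ∀ b : Fin p → ℝ, (∀ j, j ∉ S → b j = 0) →
      nsq n (fvec ψ bS - fvec ψ β0) ≤ nsq n (fvec ψ b - fvec ψ β0))
    (hbSpos : 0 < l1 (restr S2 bS))
    (hlam : lam = lam0 ^ (2 / (1 + α)) * l1 (restr S2 bS) ^ (-(1 - α) / (1 + α)))
    (hT : ∀ β : Fin p → ℝ,
      4 * |∑ i, ε i * fvec ψ β i| / n ≤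
        lam0 * nnorm n (fvec ψ β) ^ (1 - α) * l1 β ^ α)
    (hatβ : Fin p → ℝ)
    (hmin : ∀ β : Fin p → ℝ,
      (∑ i, (fvec ψ β0 i + ε i - fvec ψ hatβ i) ^ 2) / n + lam * l1 hatβ ≤
        (∑ i, (fvec ψ β0 i + ε i - fvec ψ β i) ^ 2) / n + lam * l1 β)
 :
    nsq n (fvec ψ hatβ - fvec ψ β0) + lam * l1 (hatβ - bS) ≤
      56 * lam0 ^ (4 / (1 + α)) * l1 (restr S2 bS) ^ (-(2 * (1 - α)) / (1 + α))
          * S1.card / phiSq ψ 6 S1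
        + (21 / 2) * lam0 ^ (2 / (1 + α)) * l1 (restr S2 bS) ^ (2 * α / (1 + α))
        + 7 * nsq n (fvec ψ bS - fvec ψ β0) := by
  have hn0 : (0:ℝ) < n := by exact_mod_cast hn
  have h1α : (0:ℝ) < 1 + α := by linarith
  have h1α' : (0:ℝ) < 1 - α := by linarith
  set M := l1 (restr S2 bS) with hMdef
  set D := nsq n (fvec ψ hatβ - fvec ψ β0) with hDdef
  set B := nsq n (fvec ψ bS - fvec ψ β0) with hBdef
  set dl := hatβ - bS with hdl
  set usq := nsq n (fvec ψ dl) with husqdef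
  set v1 := l1 (restr S1 dl) with hv1def
  set v2 := l1 (dl - restr S1 dl) with hv2def
  have hlam_pos : 0 < lam := by
    rw [hlam]; exact mul_pos (Real.rpow_pos_of_pos hlam0 _) (Real.rpow_pos_of_pos hbSpos _)
  have hDnn : 0 ≤ D := my_nsq_nonneg _ _
  have hBnn : 0 ≤ B := my_nsq_nonneg _ _
  have husqnn : 0 ≤ usq := my_nsq_nonneg _ _
  have hv1nn : 0 ≤ v1 := my_l1_nonneg _
  have hv2nn : 0 ≤ v2 := my_l1_nonneg _
  have hsplit : l1 dl = v1 + v2 := my_l1_split S1 dl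
  -- usq ≤ 2 D + 2 B
  have husq : usq ≤ 2 * D + 2 * B := by
    have h1 : fvec ψ dl = fun i =>
        (fvec ψ hatβ - fvec ψ β0) i - (fvec ψ bS - fvec ψ β0) i := by
      funext i
      rw [hdl, my_fvec_sub]
      simp only [Pi.sub_apply]
      ring
    rw [husqdef, h1, hDdef, hBdef]
    exact my_nsq_sub_le hn0 _ _
  -- expansion of the squared residual
  have hexpand : ∀ c : Fin p → ℝ, (∑ i, (fvec ψ β0 i + ε i - fvec ψ c i) ^ 2)
      = (∑ i, (fvec ψ c i - fvec ψ β0 i) ^ 2)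
        - 2 * (∑ i, ε i * (fvec ψ c i - fvec ψ β0 i)) + ∑ i, ε i ^ 2 := by
    intro c
    have h : ∀ i ∈ (univ : Finset (Fin n)), (fvec ψ β0 i + ε i - fvec ψ c i) ^ 2
        = ((fvec ψ c i - fvec ψ β0 i) ^ 2 - 2 * (ε i * (fvec ψ c i - fvec ψ β0 i)) + ε i ^ 2) :=
      fun i _ => by ring
    rw [Finset.sum_congr rfl h, Finset.sum_add_distrib, Finset.sum_sub_distrib, ← Finset.mul_sum]
  -- basic inequality
  have hbasic : D + lam * l1 hatβ ≤ B + lam * l1 bS + 2 * (∑ i, ε i * fvec ψ dl i) / n := by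
    have h := hmin bS
    rw [hexpand hatβ, hexpand bS] at h
    have hDeq : D = (∑ i, (fvec ψ hatβ i - fvec ψ β0 i) ^ 2) / n := rfl
    have hBeq : B = (∑ i, (fvec ψ bS i - fvec ψ β0 i) ^ 2) / n := rfl
    have hT12 : (∑ i, ε i * (fvec ψ hatβ i - fvec ψ β0 i))
        - (∑ i, ε i * (fvec ψ bS i - fvec ψ β0 i)) = ∑ i, ε i * fvec ψ dl i := by
      rw [← Finset.sum_sub_distrib]
      apply Finset.sum_congr rfl
      intro i _
      rw [hdl, my_fvec_sub]
      ring
    simp only [sub_div, add_div] at h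
    rw [hDeq, hBeq]
    have h2 : 2 * (∑ i, ε i * fvec ψ dl i) / n
        = 2 * (∑ i, ε i * (fvec ψ hatβ i - fvec ψ β0 i)) / n
          - 2 * (∑ i, ε i * (fvec ψ bS i - fvec ψ β0 i)) / n := by
      rw [← hT12]; ring
    rw [h2]
    linarith [h]
  -- cross term bound
  have hcross : 2 * (∑ i, ε i * fvec ψ dl i) / n ≤
      (1 - α) / 4 * usq
        + 1 / 2 * ((1 + α) / 2 * (lam0 ^ (2 / (1 + α)) * (l1 dl) ^ (2 * α / (1 + α)))) := by
    have h1 := hT dl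
    have habs : 2 * (∑ i, ε i * fvec ψ dl i) / n ≤ 2 * |∑ i, ε i * fvec ψ dl i| / n := by
      apply div_le_div_of_nonneg_right _ hn0.le
      have := le_abs_self (∑ i, ε i * fvec ψ dl i)
      linarith
    have h2 : 2 * |∑ i, ε i * fvec ψ dl i| / n
        = 1 / 2 * (4 * |∑ i, ε i * fvec ψ dl i| / n) := by ring
    have h3 := my_amgm_step α lam0 usq (l1 dl) hα0 hα1 hlam0 husqnn (my_l1_nonneg dl)
    have h4 : nnorm n (fvec ψ dl) = Real.sqrt usq := rfl
    rw [h4] at h1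
    linarith
  have habsorb := my_absorb_step α lam0 M lam (l1 dl) hα0 hα1 hlam0 hbSpos
    (my_l1_nonneg dl) hlam
  -- l1 decomposition
  have hdec : l1 bS + v2 ≤ l1 hatβ + v1 + 2 * M := by
    have h := my_l1_decomp S1 S2 hdisj bS hatβ (fun j hj => hbS_supp j (by rwa [hS]))
    rw [hv2def, hv1def, hMdef, hdl]
    linarith [h]
  have hMlam : lam * (l1 bS + v2) ≤ lam * (l1 hatβ + v1 + 2 * M) :=
    mul_le_mul_of_nonneg_left hdec hlam_pos.le
  have hlamsplit : lam * l1 dl = lam * v1 + lam * v2 := by rw [hsplit]; ring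
  -- master inequality
  have master : 1 / 2 * D + 1 / 2 * (lam * v2) ≤
      3 / 2 * B + 9 / 4 * (lam * M) + 3 / 2 * (lam * v1) := by
    have c1 : 2 * (∑ i, ε i * fvec ψ dl i) / n ≤
        (1 - α) / 4 * usq + 1 / 4 * (lam * M) + 1 / 2 * (lam * l1 dl) := by
      linarith [hcross, habsorb]
    have c2 : (1 - α) / 4 * usq ≤ 1 / 2 * D + 1 / 2 * B := by
      linarith [husq, mul_nonneg hα0.le husqnn]
    linarith [hbasic, c1, c2, hMlam, hlamsplit]
  -- nonnegativity of products
  have hαD : 0 ≤ α * D := mul_nonneg hα0.le hDnn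
  have hαB : 0 ≤ α * B := mul_nonneg hα0.le hBnn
  have hlv1 : 0 ≤ lam * v1 := mul_nonneg hlam_pos.le hv1nn
  have hlv2 : 0 ≤ lam * v2 := mul_nonneg hlam_pos.le hv2nn
  have hlM : 0 ≤ lam * M := mul_nonneg hlam_pos.le hbSpos.le
  have hX : 0 ≤ lam ^ 2 * (S1.card : ℝ) / phiSq ψ 6 S1 := by positivity
  -- final identities for the target
  have hlamM : lam * M = lam0 ^ (2 / (1 + α)) * M ^ (2 * α / (1 + α)) := by
    rw [hlam, mul_assoc]
    congr 1
    rw [← Real.rpow_add_one hbSpos.ne' (-(1 - α) / (1 + α))]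
    congr 1
    field_simp
    ring
  have hlam2 : lam ^ 2 = lam0 ^ (4 / (1 + α)) * M ^ (-(2 * (1 - α)) / (1 + α)) := by
    rw [hlam, mul_pow, sq, ← Real.rpow_add hlam0, sq, ← Real.rpow_add hbSpos]
    have e1 : 2 / (1 + α) + 2 / (1 + α) = 4 / (1 + α) := by ring
    have e2 : -(1 - α) / (1 + α) + -(1 - α) / (1 + α) = -(2 * (1 - α)) / (1 + α) := by ring
    rw [e1, e2]
  have hgoal_eq : 56 * lam0 ^ (4 / (1 + α)) * M ^ (-(2 * (1 - α)) / (1 + α))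
        * (S1.card : ℝ) / phiSq ψ 6 S1
        + 21 / 2 * lam0 ^ (2 / (1 + α)) * M ^ (2 * α / (1 + α)) + 7 * B
      = 56 * (lam ^ 2 * (S1.card : ℝ) / phiSq ψ 6 S1) + 21 / 2 * (lam * M) + 7 * B := by
    rw [hlam2, hlamM]
    ring
  rw [hgoal_eq]
  rw [show lam * l1 (hatβ - bS) = lam * v1 + lam * v2 from hlamsplit]
  set X := lam ^ 2 * (S1.card : ℝ) / phiSq ψ 6 S1 with hXdef
  -- case analysis
  by_cases hcase : v2 ≤ 6 * v1
  · -- compatibility case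
    have hcompat2 : 2 * (lam * v1) ≤ 8 * X + usq / 8 := by
      rcases eq_or_lt_of_le hv1nn with h0 | h0
      · rw [← h0]
        simp only [mul_zero]
        linarith [hX, husqnn]
      · have hc := my_compat_le ψ S1 dl h0 (by rw [← hv2def, ← hv1def]; exact hcase)
        have h1 : lam ^ 2 * v1 ^ 2 ≤ X * usq := by
          rw [hXdef, div_mul_eq_mul_div, le_div_iff₀ hphi]
          linarith [mul_le_mul_of_nonneg_left hc (sq_nonneg lam)]
        have h2 : (2 * (lam * v1)) ^ 2 ≤ (4 * X) * usq := by linarith [h1]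
        have h3 := my_sq_trick (2 * (lam * v1)) (4 * X) usq
          (by linarith [mul_nonneg hlam_pos.le hv1nn]) (by linarith [hX]) husqnn h2
        linarith [h3]
    have a1 : 2 * (lam * v1) ≤ 8 * X + 1 / 4 * D + 1 / 4 * B := by
      linarith [hcompat2, husq]
    have a2 : 1 / 2 * D + 1 / 2 * (lam * v1) + 1 / 2 * (lam * v2) ≤
        3 / 2 * B + 9 / 4 * (lam * M) + 2 * (lam * v1) := by linarith [master]
    have a3 : 1 / 4 * D + 1 / 2 * (lam * v1) + 1 / 2 * (lam * v2) ≤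
        7 / 4 * B + 9 / 4 * (lam * M) + 8 * X := by linarith [a1, a2]
    linarith [a3, hlv1, hlv2, hlM, hX, hBnn]
  · -- sparse case
    push_neg at hcase
    have h6 : lam * (6 * v1) ≤ lam * v2 := mul_le_mul_of_nonneg_left hcase.le hlam_pos.le
    have b2 : 1 / 2 * D + 1 / 4 * (lam * v2) ≤ 3 / 2 * B + 9 / 4 * (lam * M) := by
      linarith [master, h6]
    linarith [b2, h6, hDnn, hlv2, hX, hlM, hBnn]
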